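/- Let q = 2am − 1 be an odd prime power (a, m positive integers, m ≥ 3), ω a primitive element of F_{q^2}, and A the (m−2)×(m−1) matrix over F_{q^2} with entries A_{ij} = ω^{2j(m−3+(q−1)(i−1))} for 1 ≤ i ≤ m−2, 1 ≤ j ≤ m−1. Then A^{(q)} (entrywise q-th power of A) and A are row equivalent, and any m−2 columns of A form an invertible matrix. -/

import Mathlib

open Matrix

private lemma aux_exp_even (q s i k : ℕ) (hq : 1 ≤ q) (hik : i + k = s) :
    (s + (q - 1) * i) * q = (s + (q - 1) * k) + i * (q ^ 2 - 1) := by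
  obtain ⟨q', rfl⟩ : ∃ q', q = q' + 1 := ⟨q - 1, by omega⟩
  have h1 : q' + 1 - 1 = q' := by omega
  have h2 : (q' + 1) ^ 2 - 1 = q' ^ 2 + 2 * q' := by
    have : (q' + 1) ^ 2 = q' ^ 2 + 2 * q' + 1 := by ring
    omega
  subst hik
  rw [h1, h2]; ring

theorem matrix_row_equivalent_and_columns_invertible_even_case
    (q a m : ℕ) (ha : 0 < a) (hm : 3 ≤ m) (hq : q = 2 * a * m - 1) (hpp : IsPrimePow q)
    (hodd : Odd q)
    (F : Type) [Field F] [Fintype F] (hF : Fintype.card F = q ^ 2)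
    (ω : F) (hω : orderOf ω = q ^ 2 - 1)
    (A : Matrix (Fin (m - 2)) (Fin (m - 1)) F)
    (hA : ∀ i j, A i j = ω ^ (2 * ((j : ℕ) + 1) * ((m - 3) + (q - 1) * (i : ℕ)))) :
    (∃ M : Matrix (Fin (m - 2)) (Fin (m - 2)) F,
        IsUnit M ∧ A.map (fun e => e ^ q) = M * A) ∧
      (∀ cols : Fin (m - 2) → Fin (m - 1), Function.Injective cols →
        IsUnit (Matrix.of fun i i' : Fin (m - 2) => A i (cols i'))) := by
  -- basic numeric facts
  have hqm : 2 * m ≤ q + 1 ∧ 5 ≤ q := by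
    obtain ⟨P, hP⟩ : ∃ P, P = 2 * a * m := ⟨_, rfl⟩
    rw [← hP] at hq
    have h2m : 2 * m ≤ P := by rw [hP]; nlinarith
    omega
  obtain ⟨hqm, hq5⟩ := hqm
  have hn : 0 < q ^ 2 - 1 := by
    have h25 : 25 ≤ q ^ 2 := by nlinarith
    omega
  have hω1 : ω ^ (q ^ 2 - 1) = 1 := by rw [← hω]; exact pow_orderOf_eq_one ω
  have hωne : ω ≠ 0 := by
    intro h
    rw [h, zero_pow (by omega)] at hω1
    exact zero_ne_one hω1
  -- modular equality of powers of ω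
  have hpow : ∀ s t : ℕ, ω ^ s = ω ^ t → s ≡ t [MOD q ^ 2 - 1] := by
    intro s t hst
    set u : Fˣ := Units.mk0 ω hωne with hu
    have hust : u ^ s = u ^ t := by
      ext
      simpa [hu] using hst
    have := pow_eq_pow_iff_modEq.mp hust
    rwa [show orderOf u = q ^ 2 - 1 from by rw [← orderOf_units]; exact hω] at this
  constructor
  · -- Part 1: row reversal
    refine ⟨Matrix.of (fun i k : Fin (m - 2) => if k = Fin.rev i then (1 : F) else 0), ?_, ?_⟩
    · have hMM : (Matrix.of (fun i k : Fin (m - 2) => if k = Fin.rev i then (1 : F) else 0)) *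
          (Matrix.of (fun i k : Fin (m - 2) => if k = Fin.rev i then (1 : F) else 0)) = 1 := by
        ext i j
        rw [Matrix.mul_apply]
        rw [Finset.sum_eq_single i.rev (fun b _ hb => by simp [hb]) (by simp)]
        simp [Matrix.one_apply, Fin.rev_rev, eq_comm]
      letI := invertibleOfLeftInverse _ _ hMM
      exact isUnit_of_invertible _
    · ext i j
      rw [Matrix.map_apply]
      have hsum : ((Matrix.of (fun i k : Fin (m - 2) => if k = Fin.rev i then (1 : F) else 0)) * A) i j
          = A (Fin.rev i) j := by
        rw [Matrix.mul_apply]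
        rw [Finset.sum_eq_single i.rev (fun b _ hb => by simp [hb]) (by simp)]
        simp
      rw [hsum, hA, hA]
      have hik : (i : ℕ) + (Fin.rev i : ℕ) = m - 3 := by
        have h1 : (i : ℕ) < m - 2 := i.isLt
        have h2 : (Fin.rev i : ℕ) = m - 2 - ((i : ℕ) + 1) := Fin.val_rev i
        omega
      have h := aux_exp_even q (m - 3) (i : ℕ) (Fin.rev i : ℕ) (by omega) hik
      have key : (2 * ((j : ℕ) + 1) * ((m - 3) + (q - 1) * (i : ℕ))) * q
          = 2 * ((j : ℕ) + 1) * ((m - 3) + (q - 1) * (Fin.rev i : ℕ))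
            + (2 * ((j : ℕ) + 1) * (i : ℕ)) * (q ^ 2 - 1) := by
        calc (2 * ((j : ℕ) + 1) * ((m - 3) + (q - 1) * (i : ℕ))) * q
            = 2 * ((j : ℕ) + 1) * (((m - 3) + (q - 1) * (i : ℕ)) * q) := by ring
          _ = 2 * ((j : ℕ) + 1) * (((m - 3) + (q - 1) * (Fin.rev i : ℕ)) + (i : ℕ) * (q ^ 2 - 1)) := by
              rw [h]
          _ = 2 * ((j : ℕ) + 1) * ((m - 3) + (q - 1) * (Fin.rev i : ℕ))
              + (2 * ((j : ℕ) + 1) * (i : ℕ)) * (q ^ 2 - 1) := by ring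
      rw [← pow_mul, key, pow_add,
        pow_mul ω (2 * ((j : ℕ) + 1) * (i : ℕ)) (q ^ 2 - 1)]
      have hone : (ω ^ (2 * ((j : ℕ) + 1) * (i : ℕ))) ^ (q ^ 2 - 1) = 1 := by
        rw [← pow_mul, mul_comm (2 * ((j : ℕ) + 1) * (i : ℕ)) (q ^ 2 - 1), pow_mul, hω1, one_pow]
      rw [hone, mul_one]
  · -- Part 2: any m-2 columns invertible
    intro cols hinj
    set v : Fin (m - 2) → F := fun i' => ω ^ (2 * ((cols i' : ℕ) + 1) * (q - 1)) with hv
    set c : Fin (m - 2) → F := fun i' => ω ^ (2 * ((cols i' : ℕ) + 1) * (m - 3)) with hc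
    have hB : (Matrix.of fun i i' : Fin (m - 2) => A i (cols i'))
        = (Matrix.vandermonde v)ᵀ * Matrix.diagonal c := by
      ext i i'
      rw [Matrix.of_apply, Matrix.mul_diagonal, Matrix.transpose_apply, Matrix.vandermonde_apply,
        hA]
      simp only [hv, hc]
      rw [← pow_mul, ← pow_add]
      congr 1
      ring
    have hvinj : Function.Injective v := by
      have hyinj : ∀ j1 j2 : Fin (m - 1), (j1 : ℕ) ≤ (j2 : ℕ) →
          ω ^ (2 * ((j1 : ℕ) + 1) * (q - 1)) = ω ^ (2 * ((j2 : ℕ) + 1) * (q - 1)) → j1 = j2 := by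
        intro j1 j2 hle heq
        by_contra hne
        have hlt : (j1 : ℕ) < (j2 : ℕ) := by
          rcases Nat.lt_or_ge (j1 : ℕ) (j2 : ℕ) with h | h
          · exact h
          · exact absurd (Fin.ext (le_antisymm hle h)) hne
        set d := (j2 : ℕ) - (j1 : ℕ) with hdd
        have hmeq := hpow _ _ heq
        have hd : 2 * ((j2 : ℕ) + 1) * (q - 1)
            = 2 * ((j1 : ℕ) + 1) * (q - 1) + (q - 1) * (2 * d) := by
          have hj2 : (j2 : ℕ) = (j1 : ℕ) + d := by omega
          rw [hj2]; ring
        have hdvd : (q ^ 2 - 1) ∣ (q - 1) * (2 * d) := by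
          have := (Nat.modEq_iff_dvd' (by omega)).mp hmeq
          rw [hd, Nat.add_sub_cancel_left] at this
          exact this
        have h21 : q ^ 2 - 1 = (q - 1) * (q + 1) := by
          have hqq : (q - 1) * (q + 1) + 1 = q ^ 2 := by
            obtain ⟨q', rfl⟩ : ∃ q', q = q' + 1 := ⟨q - 1, by omega⟩
            have h1 : q' + 1 - 1 = q' := by omega
            rw [h1]; ring
          omega
        rw [h21] at hdvd
        have hdvd2 : (q + 1) ∣ 2 * d := (Nat.mul_dvd_mul_iff_left (by omega : 0 < q - 1)).mp hdvd
        have hled : q + 1 ≤ 2 * d := Nat.le_of_dvd (by omega) hdvd2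
        have hj2lt : (j2 : ℕ) < m - 1 := j2.isLt
        omega
      intro x y hxy
      simp only [hv] at hxy
      rcases Nat.le_total (cols x : ℕ) (cols y : ℕ) with h | h
      · exact hinj (hyinj _ _ h hxy)
      · exact hinj ((hyinj _ _ h hxy.symm)).symm
    rw [Matrix.isUnit_iff_isUnit_det, hB, Matrix.det_mul, Matrix.det_transpose,
      Matrix.det_diagonal, isUnit_iff_ne_zero]
    apply mul_ne_zero
    · exact Matrix.det_vandermonde_ne_zero_iff.mpr hvinj
    · exact Finset.prod_ne_zero_iff.mpr fun i _ => pow_ne_zero _ hωne
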